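/- The number of planted planar forests with $k$ ordered trees and $n$ labeled-in-traversal-order nodes whose offspring sequence is a given multiset is determined as follows: among all $n$ cyclic rotations of any fixed sequence $(s_0,\ldots,s_{n-1})$ of non-negative integers summing to $n-k$, exactly $k$ rotations yield valid forest traversal sequences, and distinct valid rotations correspond to distinct forests (up to cyclic relabeling of nodes). -/

import Mathlib

/-- A planar rooted tree: a node together with a linearly ordered list of subtrees. -/
inductive PTree : Type where
  | node : List PTree → PTree

mutual
/-- Depth-first traversal offspring sequence of a planar rooted tree. -/
def PTree.dfs : PTree → List ℕ
  | .node ts => ts.length :: PTree.dfsList ts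
/-- Depth-first traversal offspring sequence of a list of planar rooted trees. -/
def PTree.dfsList : List PTree → List ℕ
  | [] => []
  | t :: ts => t.dfs ++ PTree.dfsList ts
end

/-- Depth-first traversal offspring sequence of a planted planar forest. -/
def forestDfs (F : List PTree) : List ℕ := PTree.dfsList F


set_option linter.unusedSectionVars false
set_option linter.unusedVariables false


lemma dfsList_append (a b : List PTree) :
    PTree.dfsList (a ++ b) = PTree.dfsList a ++ PTree.dfsList b := by
  induction a with
  | nil => simp [PTree.dfsList]
  | cons t ts ih => simp [PTree.dfsList, ih]

lemma dfsList_cons_node (cs ts : List PTree) :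
    PTree.dfsList (PTree.node cs :: ts) = cs.length :: PTree.dfsList (cs ++ ts) := by
  simp [PTree.dfsList, PTree.dfs, dfsList_append]

def Valid (k : ℕ) (u : List ℕ) : Prop :=
  u.sum + k = u.length ∧ ∀ ℓ < u.length, ℓ < (u.take ℓ).sum + k

lemma valid_of_forest : ∀ N : ℕ, ∀ F : List PTree, (PTree.dfsList F).length ≤ N →
    Valid F.length (PTree.dfsList F) := by
  intro N
  induction N with
  | zero =>
    rintro (_ | ⟨⟨cs⟩, ts⟩) h
    · exact ⟨rfl, by simp [PTree.dfsList]⟩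
    · rw [dfsList_cons_node] at h; simp at h
  | succ N ih =>
    rintro (_ | ⟨⟨cs⟩, ts⟩) h
    · exact ⟨rfl, by simp [PTree.dfsList]⟩
    · rw [dfsList_cons_node] at h ⊢
      have h' := ih (cs ++ ts) (by simpa using h)
      obtain ⟨h1, h2⟩ := h'
      simp only [List.length_append] at h1 h2
      constructor
      · simp only [List.sum_cons, List.length_cons]
        omega
      · intro ℓ hℓ
        cases ℓ with
        | zero => simp
        | succ ℓ' =>
          simp only [List.length_cons] at hℓ
          have := h2 ℓ' (by omega)
          simp only [List.take_succ_cons, List.sum_cons, List.length_cons]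
          omega

lemma forest_of_valid : ∀ N : ℕ, ∀ u : List ℕ, u.length ≤ N → ∀ k, Valid k u →
    ∃ F : List PTree, F.length = k ∧ PTree.dfsList F = u := by
  intro N
  induction N with
  | zero =>
    rintro (_ | ⟨c, u'⟩) h k hv
    · refine ⟨[], ?_, rfl⟩
      obtain ⟨h1, _⟩ := hv; simpa using h1.symm
    · simp at h
  | succ N ih =>
    rintro (_ | ⟨c, u'⟩) h k hv
    · refine ⟨[], ?_, rfl⟩
      obtain ⟨h1, _⟩ := hv; simpa using h1.symm
    · obtain ⟨h1, h2⟩ := hv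
      simp only [List.sum_cons, List.length_cons] at h1 h2
      have hk1 : 1 ≤ k := by
        have := h2 0 (by omega); simp at this; omega
      have hv' : Valid (k - 1 + c) u' := by
        constructor
        · omega
        · intro ℓ hℓ
          have := h2 (ℓ + 1) (by omega)
          simp only [List.take_succ_cons, List.sum_cons, List.length_cons] at this
          omega
      obtain ⟨F', hF'len, hF'dfs⟩ := ih u' (by simpa using h) _ hv'
      refine ⟨PTree.node (F'.take c) :: F'.drop c, ?_, ?_⟩
      · simp only [List.length_cons, List.length_drop, hF'len]
        omega
      · rw [dfsList_cons_node, List.take_append_drop, hF'dfs,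
          List.length_take, hF'len]
        congr 2
        omega


def afun (n : ℕ) (s : List ℕ) (m : ℕ) : ℕ := s.getD (m % n) 0

def gfun (n : ℕ) (s : List ℕ) (m : ℕ) : ℤ :=
  (∑ j ∈ Finset.range m, (afun n s j : ℤ)) - m

section Cycle

variable (n k : ℕ) (s : List ℕ)

lemma gfun_zero : gfun n s 0 = 0 := by simp [gfun]

lemma gfun_succ (m : ℕ) : gfun n s (m + 1) = gfun n s m + afun n s m - 1 := by
  simp only [gfun, Finset.sum_range_succ]
  push_cast; ring

lemma afun_period (m : ℕ) : afun n s (m + n) = afun n s m := by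
  simp [afun, Nat.add_mod_right]

lemma gfun_step_ge (m : ℕ) : gfun n s m - 1 ≤ gfun n s (m + 1) := by
  have h := gfun_succ n s m
  have h2 : (0:ℤ) ≤ (afun n s m : ℤ) := Int.natCast_nonneg _
  omega

lemma sum_getD (t : List ℕ) : ∑ j ∈ Finset.range t.length, t.getD j 0 = t.sum := by
  induction t with
  | nil => simp
  | cons x xs ih =>
    simp only [List.length_cons, Finset.sum_range_succ', List.getD_cons_succ,
      List.getD_cons_zero, List.sum_cons, ih]
    omega

lemma gfun_n (hlen : s.length = n) : gfun n s n = (s.sum : ℤ) - n := by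
  have h : ∀ j ∈ Finset.range n, (afun n s j : ℤ) = (s.getD j 0 : ℤ) := by
    intro j hj
    simp only [afun, Nat.mod_eq_of_lt (Finset.mem_range.mp hj)]
  rw [gfun, Finset.sum_congr rfl h]
  have : ∑ j ∈ Finset.range n, (s.getD j 0 : ℤ) = ((∑ j ∈ Finset.range n, s.getD j 0 : ℕ) : ℤ) := by
    push_cast; rfl
  rw [this, ← hlen, sum_getD]

variable (hk1 : 1 ≤ k) (hkn : k ≤ n) (hlen : s.length = n) (hsum : s.sum = n - k)

include hkn hlen hsum in
lemma gfun_period (m : ℕ) : gfun n s (m + n) = gfun n s m - k := by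
  induction m with
  | zero =>
    rw [Nat.zero_add, gfun_n n s hlen, gfun_zero, hsum]
    have : ((n - k : ℕ) : ℤ) = (n : ℤ) - k := by omega
    rw [this]; ring
  | succ m ih =>
    have e : m + 1 + n = (m + n) + 1 := by omega
    rw [e, gfun_succ, ih, afun_period, gfun_succ]
    ring

include hkn hlen hsum in
lemma gfun_mul (t : ℕ) : gfun n s (t * n) = -((t * k : ℕ) : ℤ) := by
  induction t with
  | zero => simp [gfun_zero]
  | succ t ih =>
    have e : (t + 1) * n = t * n + n := by ring
    rw [e, gfun_period n k s hkn hlen hsum, ih]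
    push_cast; ring

include hk1 hkn hlen hsum in
lemma exists_gfun_le (t : ℕ) : ∃ m, gfun n s m ≤ -(t : ℤ) := by
  refine ⟨t * n, ?_⟩
  rw [gfun_mul n k s hkn hlen hsum]
  have : t ≤ t * k := Nat.le_mul_of_pos_right t hk1
  omega

include hk1 hkn hlen hsum in
lemma rot_take_sum (i : ℕ) (hi : i < n) :
    ∀ ℓ, ℓ ≤ n → (((s.rotate i).take ℓ).sum : ℤ) = gfun n s (i + ℓ) - gfun n s i + ℓ := by
  intro ℓ
  induction ℓ with
  | zero => simp
  | succ ℓ ih =>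
    intro hℓ
    have hℓn : ℓ < n := by omega
    have hlr : (s.rotate i).length = n := by rw [List.length_rotate, hlen]
    have hℓlt : ℓ < (s.rotate i).length := by omega
    rw [List.take_succ, List.sum_append, List.getElem?_eq_getElem hℓlt]
    have hget : (s.rotate i)[ℓ] = afun n s (i + ℓ) := by
      have hm : (i + ℓ) % n < s.length := by
        rw [hlen]; exact Nat.mod_lt _ (by omega)
      rw [List.getElem_rotate, afun, List.getD_eq_getElem s 0 hm]
      exact getElem_congr_idx (by rw [hlen, Nat.add_comm])
    have harith := gfun_succ n s (i + ℓ)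
    have hih := ih (by omega)
    simp only [hget, Option.toList_some, List.sum_cons, List.sum_nil, Nat.add_zero]
    rw [Nat.cast_add]
    have e : i + (ℓ + 1) = (i + ℓ) + 1 := by omega
    rw [e, harith, hih]
    push_cast
    ring



open Classical in
include hk1 hkn hlen hsum in
lemma cycle_count :
    ((Finset.range n).filter (fun i => Valid k (s.rotate i))).card = k := by
  have hn1 : 1 ≤ n := le_trans hk1 hkn
  have hex : ∀ t : ℕ, ∃ m, gfun n s m ≤ -(t : ℤ) := exists_gfun_le n k s hk1 hkn hlen hsum
  set r : ℕ → ℕ := fun t => Nat.find (hex t) with hrdef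
  have hr_le : ∀ t, gfun n s (r t) ≤ -(t:ℤ) := fun t => Nat.find_spec (hex t)
  have hr_min : ∀ t m, m < r t → -(t:ℤ) < gfun n s m := by
    intro t m hm
    have := Nat.find_min (hex t) hm
    omega
  have hr_eq : ∀ t, gfun n s (r t) = -(t:ℤ) := by
    intro t
    rcases Nat.eq_zero_or_pos (r t) with h | h
    · have h0 := hr_le t
      rw [h, gfun_zero] at h0 ⊢
      omega
    · obtain ⟨m, hm⟩ : ∃ m, r t = m + 1 := ⟨r t - 1, by omega⟩
      have h1 := hr_min t m (by omega)
      have h2 := gfun_step_ge n s m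
      have h3 := hr_le t
      rw [hm] at h3 ⊢
      omega
  have hr_sm : StrictMono r := by
    intro t t' htt
    have hle : r t ≤ r t' := Nat.find_min' (hex t) (le_trans (hr_le t') (by omega))
    rcases lt_or_eq_of_le hle with h | h
    · exact h
    · exfalso
      have e1 := hr_eq t
      have e2 := hr_eq t'
      rw [h, e2] at e1
      omega
  have hr0 : r 0 = 0 := by
    have h0 : gfun n s 0 ≤ -((0:ℕ):ℤ) := by rw [gfun_zero]; simp
    have h : r 0 ≤ 0 := Nat.find_min' (hex 0) h0
    omega
  have hexT : ∃ t, n ≤ r t := ⟨n, hr_sm.le_apply⟩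
  set T : ℕ := Nat.find hexT with hTdef
  have hT_spec : n ≤ r T := Nat.find_spec hexT
  have hT_min : ∀ t, t < T → r t < n := by
    intro t ht
    have := Nat.find_min hexT ht
    omega
  have hT1 : 1 ≤ T := by
    rcases Nat.eq_zero_or_pos T with h | h
    · rw [h, hr0] at hT_spec; omega
    · exact h
  have hper : ∀ m, gfun n s (m + n) = gfun n s m - k := gfun_period n k s hkn hlen hsum
  have key1 : ∀ t, t < T + k → r t < 2 * n := by
    intro t ht
    rcases lt_or_ge t T with h | h
    · exact lt_of_lt_of_le (hT_min t h) (by omega)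
    · have hrT1 : r (T - 1) < n := hT_min _ (by omega)
      have hg : gfun n s (r (T-1) + n) ≤ -(t:ℤ) := by
        rw [hper, hr_eq]
        omega
      have hle2 : r t ≤ r (T - 1) + n := Nat.find_min' (hex t) hg
      omega
  have key2 : ∀ t, T + k ≤ t → 2 * n ≤ r t := by
    intro t ht
    by_contra hcon
    push_neg at hcon
    have hle := hr_le t
    rcases lt_or_ge (r t) n with h | h
    · have := hr_min T (r t) (by omega)
      omega
    · obtain ⟨m, hm⟩ : ∃ m, r t = m + n := ⟨r t - n, by omega⟩
      have hmn : m < n := by omega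
      have h2 := hr_min T m (by omega)
      have h3 := hper m
      rw [hm] at hle
      omega
  have hsumrot : ∀ i : ℕ, (s.rotate i).sum = s.sum := fun i => (List.rotate_perm s i).sum_eq
  have hlenrot : ∀ i : ℕ, (s.rotate i).length = n := fun i => by rw [List.length_rotate, hlen]
  have hvalid_iff : ∀ i, i < n →
      (Valid k (s.rotate i) ↔ ∀ j, j < i + n → gfun n s (i+n) < gfun n s j) := by
    intro i hi
    constructor
    · rintro ⟨h1, h2⟩ j hj
      have window : ∀ ℓ, ℓ < n → gfun n s (i + n) < gfun n s (i + ℓ) := by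
        intro ℓ hℓ
        have h3 := h2 ℓ (by rw [hlenrot]; exact hℓ)
        have h4 := rot_take_sum n k s hk1 hkn hlen hsum i hi ℓ (le_of_lt hℓ)
        have h5 := hper i
        have h6 : (ℓ:ℤ) < (((s.rotate i).take ℓ).sum : ℤ) + k := by exact_mod_cast h3
        omega
      rcases lt_or_ge j i with h | h
      · have h5 := hper j
        have hw := window (j + n - i) (by omega)
        have e : i + (j + n - i) = j + n := by omega
        rw [e] at hw
        omega
      · have hw := window (j - i) (by omega)
        have e : i + (j - i) = j := by omega
        rw [e] at hw
        exact hw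
    · intro hrec
      constructor
      · rw [hsumrot, hsum, hlenrot]; omega
      · intro ℓ hℓ
        rw [hlenrot] at hℓ
        have h4 := rot_take_sum n k s hk1 hkn hlen hsum i hi ℓ (le_of_lt hℓ)
        have h5 := hper i
        have h6 := hrec (i + ℓ) (by omega)
        have h7 : (ℓ:ℤ) < (((s.rotate i).take ℓ).sum : ℤ) + k := by omega
        exact_mod_cast h7
  have hrec_iff : ∀ m : ℕ, (∀ j, j < m → gfun n s m < gfun n s j) ↔ ∃ t, r t = m := by
    intro m
    constructor
    · intro hm
      have hg0 : gfun n s m ≤ 0 := by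
        rcases Nat.eq_zero_or_pos m with h | h
        · rw [h, gfun_zero]
        · have := hm 0 h
          rw [gfun_zero] at this
          omega
      refine ⟨(-gfun n s m).toNat, ?_⟩
      have htn : (((-gfun n s m).toNat : ℕ) : ℤ) = -gfun n s m := Int.toNat_of_nonneg (by omega)
      have h1 : r (-gfun n s m).toNat ≤ m := Nat.find_min' _ (by rw [htn]; omega)
      rcases lt_or_eq_of_le h1 with h | h
      · exfalso
        have h2 := hm _ h
        have h3 := hr_le (-gfun n s m).toNat
        rw [htn] at h3
        omega
      · exact h
    · rintro ⟨t, rfl⟩ j hj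
      have h1 := hr_min t j hj
      have h2 := hr_eq t
      omega
  have himg : (Finset.range n).filter (fun i => Valid k (s.rotate i)) =
      (Finset.Ico T (T + k)).image (fun t => r t - n) := by
    ext i
    simp only [Finset.mem_filter, Finset.mem_range, Finset.mem_image, Finset.mem_Ico]
    constructor
    · rintro ⟨hi, hv⟩
      obtain ⟨t, htm⟩ := (hrec_iff (i + n)).mp ((hvalid_iff i hi).mp hv)
      refine ⟨t, ⟨?_, ?_⟩, by omega⟩
      · by_contra hc
        push_neg at hc
        have := hT_min t hc
        omega
      · by_contra hc
        push_neg at hc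
        have := key2 t hc
        omega
    · rintro ⟨t, ⟨ht1, ht2⟩, rfl⟩
      have h1 : n ≤ r t := le_trans hT_spec (hr_sm.monotone ht1)
      have h2 : r t < 2 * n := key1 t ht2
      have e : r t - n + n = r t := by omega
      refine ⟨by omega, ?_⟩
      apply (hvalid_iff _ (by omega)).mpr
      rw [e]
      exact (hrec_iff (r t)).mpr ⟨t, rfl⟩
  rw [himg]
  have hinj : Set.InjOn (fun t => r t - n) ↑(Finset.Ico T (T + k)) := by
    intro t1 h1 t2 h2 he
    simp only [Finset.coe_Ico, Set.mem_Ico] at h1 h2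
    have hn1' : n ≤ r t1 := le_trans hT_spec (hr_sm.monotone h1.1)
    have hn2' : n ≤ r t2 := le_trans hT_spec (hr_sm.monotone h2.1)
    simp only at he
    have : r t1 = r t2 := by omega
    exact hr_sm.injective this
  rw [Finset.card_image_of_injOn hinj, Nat.card_Ico]
  omega

end Cycle

open Classical

/-- Among the `n` cyclic rotations of a sequence of `n` non-negative integers summing to
`n - k`, exactly `k` are depth-first-traversal offspring sequences of planted planar
forests with `k` trees, and distinct valid rotations give distinct forests. -/
theorem forest_rotation_count (n k : ℕ) (hk1 : 1 ≤ k) (hkn : k ≤ n)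
    (s : List ℕ) (hlen : s.length = n) (hsum : s.sum = n - k) :
    ((Finset.range n).filter (fun i =>
        ∃ F : List PTree, F.length = k ∧ forestDfs F = s.rotate i)).card = k ∧
      ∀ i ∈ Finset.range n, ∀ j ∈ Finset.range n, ∀ F G : List PTree,
        F.length = k → forestDfs F = s.rotate i →
        G.length = k → forestDfs G = s.rotate j →
        s.rotate i ≠ s.rotate j → F ≠ G := by
  constructor
  · have heq : ((Finset.range n).filter (fun i =>
        ∃ F : List PTree, F.length = k ∧ forestDfs F = s.rotate i)) =
        (Finset.range n).filter (fun i => Valid k (s.rotate i)) := by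
      apply Finset.filter_congr
      intro i _
      constructor
      · rintro ⟨F, hFlen, hFdfs⟩
        have hv := valid_of_forest (PTree.dfsList F).length F le_rfl
        rw [hFlen] at hv
        rw [forestDfs] at hFdfs
        rw [hFdfs] at hv
        exact hv
      · intro hv
        obtain ⟨F, h1, h2⟩ := forest_of_valid (s.rotate i).length (s.rotate i) le_rfl k hv
        exact ⟨F, h1, h2⟩
    rw [heq]
    exact cycle_count n k s hk1 hkn hlen hsum
  · intro i _ j _ F G _ hF _ hG hne hFG
    apply hne
    rw [← hF, ← hG, hFG]
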